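/- Let u > 0, a ∈ E, and ε ≥ 0. Suppose p ∈ E minimizes the function z ↦ (1/2)‖z − a‖² + u·R(z) over E, and suppose x ∈ E satisfies (a − x)/u ∈ ∂_{ε²/(2u)} R(x). Then ‖x − p‖² ≤ ε². -/

import Mathlib

open RealInnerProductSpace

/-- If `p` minimizes `z ↦ (1/2)‖z − a‖² + u R z` and
`(a − x)/u ∈ ∂_{ε²/(2u)} R(x)`, then `‖x − p‖² ≤ ε²`. -/
theorem inexact_prox_dist {E : Type*} [NormedAddCommGroup E] [InnerProductSpace ℝ E]
    [FiniteDimensional ℝ E]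
    (R : E → ℝ) (hRconv : ConvexOn ℝ Set.univ R)
    (u : ℝ) (hu : 0 < u) (a : E) (ε : ℝ) (hε : 0 ≤ ε)
    (p : E) (hp : ∀ z : E, (1 / 2) * ‖p - a‖ ^ 2 + u * R p ≤ (1 / 2) * ‖z - a‖ ^ 2 + u * R z)
    (x : E)
    (hx : ∀ z, R z ≥ R x + ⟪z - x, u⁻¹ • (a - x)⟫ - ε ^ 2 / (2 * u)) :
    ‖x - p‖ ^ 2 ≤ ε ^ 2 := by
  have h1 := hp x
  have h2 := hx p
  rw [real_inner_smul_right] at h2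
  set s : ℝ := ⟪p - x, a - x⟫ with hs
  have key : ‖x - p‖ ^ 2 = ‖p - a‖ ^ 2 - ‖x - a‖ ^ 2 + 2 * s := by
    rw [hs, ← real_inner_self_eq_norm_sq, ← real_inner_self_eq_norm_sq,
      ← real_inner_self_eq_norm_sq]
    simp only [inner_sub_left, inner_sub_right]
    linarith [real_inner_comm x p, real_inner_comm x a, real_inner_comm p a]
  have h2' : u * R p ≥ u * R x + s - ε ^ 2 / 2 := by
    have h3 : u * (R x + u⁻¹ * s - ε ^ 2 / (2 * u)) ≤ u * R p :=
      mul_le_mul_of_nonneg_left h2 hu.le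
    have heq : u * (R x + u⁻¹ * s - ε ^ 2 / (2 * u)) = u * R x + s - ε ^ 2 / 2 := by
      field_simp
    linarith [heq ▸ h3]
  nlinarith [h1, h2', key]
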